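/- Let 1 ≤ t < 4/3. For every sequence γ : ℕ → ℂ such that the Hankel matrix {γ_{j+k}}_{j,k≥0} belongs to the injective tensor product ℓ¹⊗̌ℓ¹, one has ∑_{k≥0} |γ_k|^t (1+k)^{3t/2 − 1} < ∞. -/

import Mathlib

open Filter Finset

/-- The Hankel matrix `{γ_{j+k}}` belongs to the injective tensor product `ℓ¹ ⊗̌ ℓ¹`:
the partial bilinear sums against sequences in the unit ball of `ℓ^∞` are uniformly bounded. -/
def HankelInInj (γ : ℕ → ℂ) : Prop :=
  ∃ C : ℝ, ∀ (N : ℕ) (x y : ℕ → ℂ), (∀ j, ‖x j‖ ≤ 1) → (∀ k, ‖y k‖ ≤ 1) →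
    ‖∑ j ∈ Finset.range (N + 1), ∑ k ∈ Finset.range (N + 1), γ (j + k) * x j * y k‖ ≤ C

open intervalIntegral


noncomputable def Efun (n : ℤ) (β : ℝ) : ℂ :=
  Complex.exp (2 * Real.pi * Complex.I * n * β)

lemma Efun_continuous (n : ℤ) : Continuous (Efun n) := by
  unfold Efun
  fun_prop

lemma Efun_mul (m n : ℤ) (β : ℝ) : Efun m β * Efun n β = Efun (m + n) β := by
  unfold Efun
  rw [← Complex.exp_add]
  congr 1
  push_cast
  ring

lemma Efun_conj (n : ℤ) (β : ℝ) :
    (starRingEnd ℂ) (Efun n β) = Efun (-n) β := by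
  unfold Efun
  rw [← Complex.exp_conj]
  congr 1
  simp only [map_mul, map_ofNat, Complex.conj_ofReal, Complex.conj_I, map_intCast]
  push_cast
  ring

lemma integral_Efun (n : ℤ) :
    (∫ β in (0:ℝ)..1, Efun n β) = if n = 0 then 1 else 0 := by
  rcases eq_or_ne n 0 with h | h
  · simp [h, Efun]
  · have hc : (2 * (Real.pi:ℂ) * Complex.I * n) ≠ 0 := by
      simp [Real.pi_ne_zero, Complex.I_ne_zero, h]
    have key := integral_exp_mul_complex (a := (0:ℝ)) (b := 1) hc
    simp only [Complex.ofReal_one, Complex.ofReal_zero, mul_one, mul_zero,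
      Complex.exp_zero] at key
    have hL : (∫ β in (0:ℝ)..1, Efun n β)
        = ∫ β in (0:ℝ)..1, Complex.exp (2 * (Real.pi:ℂ) * Complex.I * n * β) := rfl
    rw [hL, key]
    have h1 : Complex.exp (2 * (Real.pi:ℂ) * Complex.I * n) = 1 := by
      rw [show (2 * (Real.pi:ℂ) * Complex.I * n) = n * (2 * Real.pi * Complex.I) by ring]
      exact Complex.exp_int_mul_two_pi_mul_I n
    simp [h, h1]

private lemma two_pow_even' {k : ℕ} (hk : k ≠ 0) : ∃ r, (2:ℕ)^k = r + r := by
  obtain ⟨r, hr⟩ := (Nat.even_pow.mpr ⟨even_two, hk⟩ : Even ((2:ℕ)^k))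
  exact ⟨r, hr⟩

private lemma two_le_two_pow {k : ℕ} (hk : k ≠ 0) : 2 ≤ (2:ℕ)^k :=
  Nat.one_lt_two_pow_iff.mpr hk

private lemma two_pow_inj {b d : ℕ} (h : (2:ℕ)^b = 2^d) : b = d :=
  Nat.pow_right_injective (le_refl 2) h

private lemma sidon_base : ∀ (b c d : ℕ), 2^0 + 2^b = 2^c + 2^d →
    (0 = c ∧ b = d) ∨ (0 = d ∧ b = c) := by
  intro b c d heq
  rcases Nat.eq_zero_or_pos c with hc | hc
  · subst hc
    left
    refine ⟨rfl, two_pow_inj ?_⟩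
    omega
  rcases Nat.eq_zero_or_pos d with hd | hd
  · subst hd
    right
    refine ⟨rfl, two_pow_inj ?_⟩
    omega
  · exfalso
    obtain ⟨rc, hrc⟩ := two_pow_even' (by omega : c ≠ 0)
    obtain ⟨rd, hrd⟩ := two_pow_even' (by omega : d ≠ 0)
    rcases Nat.eq_zero_or_pos b with hb | hb
    · subst hb
      have h1 := two_le_two_pow (by omega : c ≠ 0)
      have h2 := two_le_two_pow (by omega : d ≠ 0)
      simp only [pow_zero] at heq
      omega
    · obtain ⟨rb, hrb⟩ := two_pow_even' (by omega : b ≠ 0)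
      simp only [pow_zero] at heq
      omega

lemma sidon_pow_two : ∀ (a b c d : ℕ), 2^a + 2^b = 2^c + 2^d →
    (a = c ∧ b = d) ∨ (a = d ∧ b = c) := by
  have key : ∀ n a b c d : ℕ, a + b + c + d ≤ n → 2^a + 2^b = 2^c + 2^d →
      (a = c ∧ b = d) ∨ (a = d ∧ b = c) := by
    intro n
    induction n with
    | zero =>
      intro a b c d hle _
      omega
    | succ n ih =>
      intro a b c d hle heq
      rcases Nat.eq_zero_or_pos a with ha | ha
      · subst ha; exact sidon_base b c d heq
      rcases Nat.eq_zero_or_pos b with hb | hb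
      · subst hb
        have := sidon_base a c d (by omega)
        omega
      rcases Nat.eq_zero_or_pos c with hc | hc
      · subst hc
        have := sidon_base d a b (by omega)
        omega
      rcases Nat.eq_zero_or_pos d with hd | hd
      · subst hd
        have := sidon_base c a b (by omega)
        omega
      · obtain ⟨a', rfl⟩ : ∃ a', a = a' + 1 := ⟨a - 1, by omega⟩
        obtain ⟨b', rfl⟩ : ∃ b', b = b' + 1 := ⟨b - 1, by omega⟩
        obtain ⟨c', rfl⟩ : ∃ c', c = c' + 1 := ⟨c - 1, by omega⟩
        obtain ⟨d', rfl⟩ : ∃ d', d = d' + 1 := ⟨d - 1, by omega⟩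
        have heq' : 2^a' + 2^b' = 2^c' + 2^d' := by
          simp only [pow_succ] at heq
          omega
        have := ih a' b' c' d' (by omega) heq'
        omega
  intro a b c d h
  exact key (a+b+c+d) a b c d le_rfl h

lemma Efun_norm (n : ℤ) (β : ℝ) : ‖Efun n β‖ = 1 := by
  unfold Efun
  rw [show (2 * (Real.pi:ℂ) * Complex.I * n * β)
      = ((2 * Real.pi * n * β : ℝ) : ℂ) * Complex.I by push_cast; ring]
  exact Complex.norm_exp_ofReal_mul_I _

noncomputable def hfun (γ : ℕ → ℂ) (N j : ℕ) (β : ℝ) : ℂ :=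
  ∑ k ∈ Finset.range (N+1), γ (j+k) * Efun (2^k) β

lemma hfun_continuous (γ : ℕ → ℂ) (N j : ℕ) : Continuous (hfun γ N j) := by
  unfold hfun
  exact continuous_finset_sum _ fun k _ => continuous_const.mul (Efun_continuous _)

lemma integral_expand {ι : Type*} (s : Finset ι) (c : ι → ℂ) (n : ι → ℤ) :
    (∫ β in (0:ℝ)..1, ∑ i ∈ s, c i * Efun (n i) β)
      = ∑ i ∈ s, c i * (if n i = 0 then 1 else 0) := by
  rw [intervalIntegral.integral_finset_sum]
  · exact Finset.sum_congr rfl fun i _ => by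
      rw [intervalIntegral.integral_const_mul, integral_Efun]
  · intro i _
    exact (continuous_const.mul (Efun_continuous _)).intervalIntegrable _ _

lemma pow_sub_eq_zero_iff (k k' : ℕ) : ((2:ℤ)^k - 2^k' = 0) ↔ k = k' := by
  constructor
  · intro h
    have h2 : (2:ℕ)^k = 2^k' := by exact_mod_cast (by omega : (2:ℤ)^k = 2^k')
    exact two_pow_inj h2
  · rintro rfl; ring

/-- L² identity. -/
lemma integral_sq (γ : ℕ → ℂ) (N j : ℕ) :
    (∫ β in (0:ℝ)..1, ‖hfun γ N j β‖^2)
      = ∑ k ∈ Finset.range (N+1), ‖γ (j+k)‖^2 := by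
  have hpt : ∀ β : ℝ, ((‖hfun γ N j β‖^2 : ℝ) : ℂ)
      = ∑ p ∈ (Finset.range (N+1)) ×ˢ (Finset.range (N+1)),
          (γ (j+p.1) * (starRingEnd ℂ) (γ (j+p.2))) * Efun ((2^p.1 : ℤ) - 2^p.2) β := by
    intro β
    have h1 : ((‖hfun γ N j β‖^2 : ℝ) : ℂ)
        = hfun γ N j β * (starRingEnd ℂ) (hfun γ N j β) := by
      rw [Complex.mul_conj']
      norm_cast
    rw [h1]
    unfold hfun
    rw [map_sum, Finset.sum_mul_sum, Finset.sum_product]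
    refine Finset.sum_congr rfl fun k _ => Finset.sum_congr rfl fun k' _ => ?_
    rw [map_mul, Efun_conj, mul_mul_mul_comm, Efun_mul, sub_eq_add_neg]
  have hInt : ((∫ β in (0:ℝ)..1, ‖hfun γ N j β‖^2 : ℝ) : ℂ)
      = ∑ p ∈ (Finset.range (N+1)) ×ˢ (Finset.range (N+1)),
          (γ (j+p.1) * (starRingEnd ℂ) (γ (j+p.2)))
            * (if ((2^p.1 : ℤ) - 2^p.2) = 0 then 1 else 0) := by
    rw [← intervalIntegral.integral_ofReal]
    rw [intervalIntegral.integral_congr (g := fun β => ∑ p ∈ (Finset.range (N+1)) ×ˢ (Finset.range (N+1)),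
          (γ (j+p.1) * (starRingEnd ℂ) (γ (j+p.2))) * Efun ((2^p.1 : ℤ) - 2^p.2) β)
        (fun β _ => hpt β)]
    exact integral_expand _ _ _
  have hdiag : ∑ p ∈ (Finset.range (N+1)) ×ˢ (Finset.range (N+1)),
          (γ (j+p.1) * (starRingEnd ℂ) (γ (j+p.2)))
            * (if ((2^p.1 : ℤ) - 2^p.2) = 0 then 1 else 0)
      = ((∑ k ∈ Finset.range (N+1), ‖γ (j+k)‖^2 : ℝ) : ℂ) := by
    rw [Finset.sum_product]
    push_cast
    refine Finset.sum_congr rfl fun k hk => ?_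
    have : ∀ k' ∈ Finset.range (N+1),
        (γ (j+k) * (starRingEnd ℂ) (γ (j+k'))) * (if ((2^k : ℤ) - 2^k') = 0 then 1 else 0)
        = if k = k' then γ (j+k) * (starRingEnd ℂ) (γ (j+k)) else 0 := by
      intro k' _
      rcases eq_or_ne k k' with h | h
      · subst h
        simp [pow_sub_eq_zero_iff]
      · rw [if_neg h, if_neg (fun hc => h ((pow_sub_eq_zero_iff k k').mp hc)), mul_zero]
    rw [Finset.sum_congr rfl this, Finset.sum_ite_eq (Finset.range (N+1)) k
      (fun k' => γ (j+k) * (starRingEnd ℂ) (γ (j+k)))]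
    rw [if_pos hk, Complex.mul_conj']
    try norm_cast
  have := hInt.trans hdiag
  exact_mod_cast this

/-- L⁴ bound via the Sidon property of powers of 2. -/
lemma integral_quartic (γ : ℕ → ℂ) (N j : ℕ) :
    (∫ β in (0:ℝ)..1, ‖hfun γ N j β‖^4)
      ≤ 2 * (∑ k ∈ Finset.range (N+1), ‖γ (j+k)‖^2)^2 := by
  classical
  set s := Finset.range (N+1) with hs
  set w : ℕ × ℕ → ℝ := fun p => ‖γ (j+p.1)‖^2 * ‖γ (j+p.2)‖^2 with hw
  set F : ℕ × ℕ → ℕ × ℕ → ℝ := fun p q =>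
    if ((2:ℤ)^p.1 + 2^p.2 - 2^q.1 - 2^q.2) = 0 then w p else 0 with hF
  have hw_nonneg : ∀ p, 0 ≤ w p := fun p => mul_nonneg (sq_nonneg _) (sq_nonneg _)
  -- pointwise expansion
  have hpt : ∀ β : ℝ, ((‖hfun γ N j β‖^4 : ℝ) : ℂ)
      = ∑ r ∈ (s ×ˢ s) ×ˢ (s ×ˢ s),
          (γ (j+r.1.1) * γ (j+r.1.2) * (starRingEnd ℂ) (γ (j+r.2.1))
            * (starRingEnd ℂ) (γ (j+r.2.2)))
            * Efun ((2^r.1.1 : ℤ) + 2^r.1.2 - 2^r.2.1 - 2^r.2.2) β := by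
    intro β
    have h1 : ((‖hfun γ N j β‖^4 : ℝ) : ℂ)
        = (hfun γ N j β * hfun γ N j β)
          * ((starRingEnd ℂ) (hfun γ N j β) * (starRingEnd ℂ) (hfun γ N j β)) := by
      have h2 : (hfun γ N j β * hfun γ N j β)
          * ((starRingEnd ℂ) (hfun γ N j β) * (starRingEnd ℂ) (hfun γ N j β))
          = (hfun γ N j β * (starRingEnd ℂ) (hfun γ N j β))
            * (hfun γ N j β * (starRingEnd ℂ) (hfun γ N j β)) := by ring
      rw [h2, Complex.mul_conj']
      push_cast
      ring
    rw [h1]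
    have hsq : hfun γ N j β * hfun γ N j β
        = ∑ p ∈ s ×ˢ s, (γ (j+p.1) * γ (j+p.2)) * Efun ((2^p.1 : ℤ) + 2^p.2) β := by
      unfold hfun
      rw [Finset.sum_mul_sum, Finset.sum_product]
      refine Finset.sum_congr rfl fun k _ => Finset.sum_congr rfl fun k' _ => ?_
      rw [mul_mul_mul_comm, Efun_mul]
    have hcsq : (starRingEnd ℂ) (hfun γ N j β) * (starRingEnd ℂ) (hfun γ N j β)
        = ∑ p ∈ s ×ˢ s, ((starRingEnd ℂ) (γ (j+p.1)) * (starRingEnd ℂ) (γ (j+p.2)))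
            * Efun (-(2^p.1 : ℤ) + -(2^p.2)) β := by
      unfold hfun
      rw [map_sum, Finset.sum_mul_sum, Finset.sum_product]
      refine Finset.sum_congr rfl fun k _ => Finset.sum_congr rfl fun k' _ => ?_
      rw [map_mul, map_mul, Efun_conj, Efun_conj, mul_mul_mul_comm, Efun_mul]
    rw [hsq, hcsq, Finset.sum_mul_sum,
      Finset.sum_product (f := fun r : (ℕ × ℕ) × (ℕ × ℕ) =>
        (γ (j+r.1.1) * γ (j+r.1.2) * (starRingEnd ℂ) (γ (j+r.2.1))
          * (starRingEnd ℂ) (γ (j+r.2.2)))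
          * Efun ((2^r.1.1 : ℤ) + 2^r.1.2 - 2^r.2.1 - 2^r.2.2) β)]
    refine Finset.sum_congr rfl fun p _ => Finset.sum_congr rfl fun q _ => ?_
    rw [mul_mul_mul_comm, Efun_mul]
    congr 1
    · ring
    · congr 1
      ring
  -- integrate
  have hInt : ((∫ β in (0:ℝ)..1, ‖hfun γ N j β‖^4 : ℝ) : ℂ)
      = ∑ r ∈ (s ×ˢ s) ×ˢ (s ×ˢ s),
          (γ (j+r.1.1) * γ (j+r.1.2) * (starRingEnd ℂ) (γ (j+r.2.1))
            * (starRingEnd ℂ) (γ (j+r.2.2)))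
            * (if ((2^r.1.1 : ℤ) + 2^r.1.2 - 2^r.2.1 - 2^r.2.2) = 0 then 1 else 0) := by
    rw [← intervalIntegral.integral_ofReal]
    rw [intervalIntegral.integral_congr (g := fun β => ∑ r ∈ (s ×ˢ s) ×ˢ (s ×ˢ s),
          (γ (j+r.1.1) * γ (j+r.1.2) * (starRingEnd ℂ) (γ (j+r.2.1))
            * (starRingEnd ℂ) (γ (j+r.2.2)))
            * Efun ((2^r.1.1 : ℤ) + 2^r.1.2 - 2^r.2.1 - 2^r.2.2) β)
        (fun β _ => hpt β)]
    exact integral_expand _ _ _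
  -- termwise real form
  have hterm : ∀ r ∈ (s ×ˢ s) ×ˢ (s ×ˢ s),
      (γ (j+r.1.1) * γ (j+r.1.2) * (starRingEnd ℂ) (γ (j+r.2.1))
        * (starRingEnd ℂ) (γ (j+r.2.2)))
        * (if ((2^r.1.1 : ℤ) + 2^r.1.2 - 2^r.2.1 - 2^r.2.2) = 0 then 1 else 0)
      = ((F r.1 r.2 : ℝ) : ℂ) := by
    intro r _
    by_cases hc : ((2:ℤ)^r.1.1 + 2^r.1.2 - 2^r.2.1 - 2^r.2.2) = 0
    · rw [if_pos hc, mul_one, hF]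
      simp only [if_pos hc]
      have hnat : 2^r.1.1 + 2^r.1.2 = 2^r.2.1 + 2^r.2.2 := by
        exact_mod_cast (by omega : ((2:ℤ)^r.1.1 + 2^r.1.2 : ℤ) = 2^r.2.1 + 2^r.2.2)
      have key : γ (j+r.1.1) * γ (j+r.1.2) * (starRingEnd ℂ) (γ (j+r.2.1))
          * (starRingEnd ℂ) (γ (j+r.2.2))
          = (γ (j+r.1.1) * (starRingEnd ℂ) (γ (j+r.1.1)))
            * (γ (j+r.1.2) * (starRingEnd ℂ) (γ (j+r.1.2))) := by
        rcases sidon_pow_two _ _ _ _ hnat with ⟨h1, h2⟩ | ⟨h1, h2⟩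
        · rw [← h1, ← h2]; ring
        · rw [← h1, ← h2]; ring
      rw [key, Complex.mul_conj', Complex.mul_conj']
      rw [hw]
      push_cast
      ring
    · rw [if_neg hc, mul_zero, hF]
      simp only [if_neg hc]
      norm_num
  have hWc : ((∫ β in (0:ℝ)..1, ‖hfun γ N j β‖^4 : ℝ) : ℂ)
      = ((∑ p ∈ s ×ˢ s, ∑ q ∈ s ×ˢ s, F p q : ℝ) : ℂ) := by
    rw [hInt, Finset.sum_congr rfl hterm,
      Finset.sum_product (f := fun r : (ℕ × ℕ) × (ℕ × ℕ) => ((F r.1 r.2 : ℝ) : ℂ))]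
    norm_cast
  have hW : (∫ β in (0:ℝ)..1, ‖hfun γ N j β‖^4)
      = ∑ p ∈ s ×ˢ s, ∑ q ∈ s ×ˢ s, F p q := by exact_mod_cast hWc
  rw [hW]
  -- bound the diagonal sums
  have inner : ∀ p ∈ s ×ˢ s, ∑ q ∈ s ×ˢ s, F p q ≤ 2 * w p := by
    intro p hp
    have hswap : (p.2, p.1) ∈ s ×ˢ s := by
      rw [Finset.mem_product] at hp ⊢
      exact ⟨hp.2, hp.1⟩
    have hptw : ∀ q ∈ s ×ˢ s, F p q
        ≤ (if q = p then w p else 0) + (if q = (p.2, p.1) then w p else 0) := by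
      intro q _
      by_cases hc : ((2:ℤ)^p.1 + 2^p.2 - 2^q.1 - 2^q.2) = 0
      · have hnat : 2^p.1 + 2^p.2 = 2^q.1 + 2^q.2 := by
          exact_mod_cast (by omega : ((2:ℤ)^p.1 + 2^p.2 : ℤ) = 2^q.1 + 2^q.2)
        have hFval : F p q = w p := by rw [hF]; simp only [if_pos hc]
        rcases sidon_pow_two _ _ _ _ hnat with ⟨h1, h2⟩ | ⟨h1, h2⟩
        · have hq : q = p := Prod.ext h1.symm h2.symm
          rw [hFval, hq, if_pos rfl]
          have : (0:ℝ) ≤ if p = (p.2, p.1) then w p else 0 := by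
            split_ifs
            exacts [hw_nonneg p, le_rfl]
          linarith
        · have hq : q = (p.2, p.1) := Prod.ext h2.symm h1.symm
          rw [hFval, hq, if_pos rfl]
          have : (0:ℝ) ≤ if (p.2, p.1) = p then w p else 0 := by
            split_ifs
            exacts [hw_nonneg p, le_rfl]
          linarith
      · have hFval : F p q = 0 := by rw [hF]; simp only [if_neg hc]
        rw [hFval]
        have h1 : (0:ℝ) ≤ if q = p then w p else 0 := by
          split_ifs
          exacts [hw_nonneg p, le_rfl]
        have h2 : (0:ℝ) ≤ if q = (p.2, p.1) then w p else 0 := by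
          split_ifs
          exacts [hw_nonneg p, le_rfl]
        linarith
    calc ∑ q ∈ s ×ˢ s, F p q
        ≤ ∑ q ∈ s ×ˢ s, ((if q = p then w p else 0) + (if q = (p.2, p.1) then w p else 0)) :=
          Finset.sum_le_sum hptw
      _ = (if p ∈ s ×ˢ s then w p else 0) + (if (p.2, p.1) ∈ s ×ˢ s then w p else 0) := by
          rw [Finset.sum_add_distrib, Finset.sum_ite_eq' (s ×ˢ s) p (fun _ => w p),
            Finset.sum_ite_eq' (s ×ˢ s) (p.2, p.1) (fun _ => w p)]
      _ = 2 * w p := by rw [if_pos hp, if_pos hswap]; ring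
  calc ∑ p ∈ s ×ˢ s, ∑ q ∈ s ×ˢ s, F p q
      ≤ ∑ p ∈ s ×ˢ s, 2 * w p := Finset.sum_le_sum inner
    _ = 2 * ∑ p ∈ s ×ˢ s, w p := by rw [← Finset.mul_sum]
    _ = 2 * (∑ k ∈ s, ‖γ (j+k)‖^2)^2 := by
        congr 1
        rw [sq, Finset.sum_mul_sum, Finset.sum_product]

lemma cubic_ineq {q s : ℝ} (hq : 0 ≤ q) (hs : 0 < s) :
    3 * q^2 ≤ 2 * s * q + s⁻¹^2 * q^4 := by
  have key : 0 ≤ q^4 + 2*s^3*q - 3*s^2*q^2 := by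
    nlinarith [mul_nonneg (mul_nonneg hq (sq_nonneg (q - s))) (by linarith : (0:ℝ) ≤ q + 2*s)]
  have hs2 : (0:ℝ) < s^2 := by positivity
  have heq : 2*s*q + s⁻¹^2 * q^4 - 3*q^2 = (q^4 + 2*s^3*q - 3*s^2*q^2)/s^2 := by
    field_simp
    ring
  have := div_nonneg key hs2.le
  linarith [heq ▸ (by linarith [div_nonneg key hs2.le] : (0:ℝ) ≤ (q^4 + 2*s^3*q - 3*s^2*q^2)/s^2)]

section main
variable {γ : ℕ → ℂ} {C : ℝ}

lemma sum_norm_h_le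
    (hγ : ∀ (N : ℕ) (x y : ℕ → ℂ), (∀ j, ‖x j‖ ≤ 1) → (∀ k, ‖y k‖ ≤ 1) →
      ‖∑ j ∈ Finset.range (N + 1), ∑ k ∈ Finset.range (N + 1), γ (j + k) * x j * y k‖ ≤ C)
    (N : ℕ) (β : ℝ) :
    ∑ j ∈ Finset.range (N+1), ‖hfun γ N j β‖ ≤ C := by
  classical
  set y : ℕ → ℂ := fun k => Efun (2^k) β with hy
  set x : ℕ → ℂ := fun j => if hfun γ N j β = 0 then 0
    else (‖hfun γ N j β‖ : ℂ) / hfun γ N j β with hx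
  have hxn : ∀ j, ‖x j‖ ≤ 1 := by
    intro j
    rw [hx]
    dsimp only
    split_ifs with h
    · simp
    · rw [norm_div, Complex.norm_real, Real.norm_eq_abs, abs_norm]
      rw [div_self (norm_ne_zero_iff.mpr h)]
  have hyn : ∀ k, ‖y k‖ ≤ 1 := fun k => le_of_eq (Efun_norm _ _)
  have happ := hγ N x y hxn hyn
  have hinner : ∀ j, ∑ k ∈ Finset.range (N+1), γ (j + k) * x j * y k
      = ((‖hfun γ N j β‖ : ℝ) : ℂ) := by
    intro j
    have h1 : ∑ k ∈ Finset.range (N+1), γ (j + k) * x j * y k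
        = x j * hfun γ N j β := by
      unfold hfun
      rw [Finset.mul_sum]
      exact Finset.sum_congr rfl fun k _ => by ring
    rw [h1, hx]
    dsimp only
    split_ifs with h
    · simp [h]
    · rw [div_mul_cancel₀ _ h]
  rw [Finset.sum_congr rfl (fun j _ => hinner j)] at happ
  rw [← Complex.ofReal_sum] at happ
  rw [Complex.norm_real, Real.norm_eq_abs] at happ
  calc ∑ j ∈ Finset.range (N+1), ‖hfun γ N j β‖
      ≤ |∑ j ∈ Finset.range (N+1), ‖hfun γ N j β‖| := le_abs_self _
    _ ≤ C := happ

lemma sum_B1_le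
    (hγ : ∀ (N : ℕ) (x y : ℕ → ℂ), (∀ j, ‖x j‖ ≤ 1) → (∀ k, ‖y k‖ ≤ 1) →
      ‖∑ j ∈ Finset.range (N + 1), ∑ k ∈ Finset.range (N + 1), γ (j + k) * x j * y k‖ ≤ C)
    (N : ℕ) :
    ∑ j ∈ Finset.range (N+1), (∫ β in (0:ℝ)..1, ‖hfun γ N j β‖) ≤ C := by
  have h1 : ∑ j ∈ Finset.range (N+1), (∫ β in (0:ℝ)..1, ‖hfun γ N j β‖)
      = ∫ β in (0:ℝ)..1, ∑ j ∈ Finset.range (N+1), ‖hfun γ N j β‖ := by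
    rw [intervalIntegral.integral_finset_sum]
    intro i _
    exact ((hfun_continuous γ N i).norm).intervalIntegrable _ _
  rw [h1]
  have h2 : (∫ β in (0:ℝ)..1, ∑ j ∈ Finset.range (N+1), ‖hfun γ N j β‖)
      ≤ ∫ _ in (0:ℝ)..1, C := by
    apply intervalIntegral.integral_mono_on (by norm_num)
    · exact (continuous_finset_sum _ fun i _ =>
        (hfun_continuous γ N i).norm).intervalIntegrable _ _
    · exact intervalIntegrable_const
    · intro β _
      exact sum_norm_h_le hγ N β
  simpa using h2

lemma sqrt_sigma_le (N j : ℕ) :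
    Real.sqrt (∑ k ∈ Finset.range (N+1), ‖γ (j+k)‖^2)
      ≤ Real.sqrt 2 * (∫ β in (0:ℝ)..1, ‖hfun γ N j β‖) := by
  classical
  set σ : ℝ := ∑ k ∈ Finset.range (N+1), ‖γ (j+k)‖^2 with hσ
  have hσ0 : 0 ≤ σ := Finset.sum_nonneg fun k _ => sq_nonneg _
  set B1 : ℝ := ∫ β in (0:ℝ)..1, ‖hfun γ N j β‖ with hB1
  have hB10 : 0 ≤ B1 := by
    apply intervalIntegral.integral_nonneg (by norm_num)
    intro β _
    exact norm_nonneg _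
  rcases eq_or_lt_of_le hσ0 with h0 | hpos
  · rw [← h0, Real.sqrt_zero]
    positivity
  · set s : ℝ := Real.sqrt 2 * Real.sqrt σ with hs
    have hs0 : 0 < s := by positivity
    have hs2 : s^2 = 2 * σ := by
      rw [hs, mul_pow, Real.sq_sqrt (by norm_num : (0:ℝ) ≤ 2), Real.sq_sqrt hσ0]
    -- pointwise inequality 3 q^2 ≤ 2 s q + s⁻² q⁴
    have hpt : ∀ β ∈ Set.Icc (0:ℝ) 1,
        3 * ‖hfun γ N j β‖^2 ≤ 2 * s * ‖hfun γ N j β‖ + s⁻¹^2 * ‖hfun γ N j β‖^4 :=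
      fun β _ => cubic_ineq (norm_nonneg _) hs0
    -- integrate
    have hint : 3 * σ ≤ 2 * s * B1
        + s⁻¹^2 * (∫ β in (0:ℝ)..1, ‖hfun γ N j β‖^4) := by
      have hmono : (∫ β in (0:ℝ)..1, 3 * ‖hfun γ N j β‖^2)
          ≤ ∫ β in (0:ℝ)..1, (2 * s * ‖hfun γ N j β‖ + s⁻¹^2 * ‖hfun γ N j β‖^4) := by
        apply intervalIntegral.integral_mono_on (by norm_num : (0:ℝ) ≤ 1)
          ((continuous_const.mul ((hfun_continuous γ N j).norm.pow 2)).intervalIntegrable _ _)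
          ?_ hpt
        exact ((continuous_const.mul (hfun_continuous γ N j).norm).add
          (continuous_const.mul ((hfun_continuous γ N j).norm.pow 4))).intervalIntegrable _ _
      · rw [intervalIntegral.integral_const_mul] at hmono
        rw [integral_sq, ← hσ] at hmono
        have hsplit : (∫ β in (0:ℝ)..1,
            (2 * s * ‖hfun γ N j β‖ + s⁻¹^2 * ‖hfun γ N j β‖^4))
            = 2 * s * B1 + s⁻¹^2 * (∫ β in (0:ℝ)..1, ‖hfun γ N j β‖^4) := by
          rw [intervalIntegral.integral_add, intervalIntegral.integral_const_mul,
            intervalIntegral.integral_const_mul]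
          · exact (continuous_const.mul (hfun_continuous γ N j).norm).intervalIntegrable _ _
          · exact (continuous_const.mul ((hfun_continuous γ N j).norm.pow 4)).intervalIntegrable _ _
        rw [hsplit] at hmono
        exact hmono
    have hquart := integral_quartic γ N j
    rw [← hσ] at hquart
    have hB4 : s⁻¹^2 * (∫ β in (0:ℝ)..1, ‖hfun γ N j β‖^4) ≤ σ := by
      have h1 : s⁻¹^2 * (∫ β in (0:ℝ)..1, ‖hfun γ N j β‖^4) ≤ s⁻¹^2 * (2*σ^2) := by
        apply mul_le_mul_of_nonneg_left hquart
        positivity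
      have h2 : s⁻¹^2 * (2*σ^2) = σ := by
        rw [inv_pow, hs2]
        field_simp
      linarith
    -- conclude
    have hσB : σ ≤ s * B1 := by linarith
    have hsqrt : Real.sqrt σ * Real.sqrt σ ≤ Real.sqrt 2 * Real.sqrt σ * B1 := by
      rw [Real.mul_self_sqrt hσ0, ← hs]
      exact hσB
    have hsσ : 0 < Real.sqrt σ := Real.sqrt_pos.mpr hpos
    have hfin : Real.sqrt σ * Real.sqrt σ ≤ (Real.sqrt 2 * B1) * Real.sqrt σ := by
      calc Real.sqrt σ * Real.sqrt σ ≤ Real.sqrt 2 * Real.sqrt σ * B1 := hsqrt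
        _ = (Real.sqrt 2 * B1) * Real.sqrt σ := by ring
    exact le_of_mul_le_mul_right hfin hsσ
end main

section bookkeeping

variable {g : ℕ → ℝ} {K : ℝ}

-- partition of range (2^I)
lemma range_two_pow_partition (F : ℕ → ℝ) (I : ℕ) :
    ∑ m ∈ Finset.range (2^I), F m
      = F 0 + ∑ i ∈ Finset.range I, ∑ m ∈ Finset.Ico (2^i) (2^(i+1)), F m := by
  induction I with
  | zero => simp
  | succ I ih =>
    have hsplit : ∑ m ∈ Finset.Ico 0 (2^I) , F m + ∑ m ∈ Finset.Ico (2^I) (2^(I+1)), F m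
        = ∑ m ∈ Finset.Ico 0 (2^(I+1)), F m :=
      Finset.sum_Ico_consecutive F (Nat.zero_le _)
        (Nat.pow_le_pow_right (by norm_num) (Nat.le_succ I))
    simp only [← Finset.range_eq_Ico] at hsplit
    rw [← hsplit, ih, Finset.sum_range_succ]
    ring

lemma sum_rpow_le_rpow_sum {ι : Type*} (s : Finset ι) (a : ι → ℝ) (ha : ∀ i ∈ s, 0 ≤ a i)
    {t : ℝ} (ht : 1 ≤ t) :
    ∑ i ∈ s, a i ^ t ≤ (∑ i ∈ s, a i) ^ t := by
  set S := ∑ i ∈ s, a i with hS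
  have hS0 : 0 ≤ S := Finset.sum_nonneg ha
  have hterm : ∀ i ∈ s, a i ^ t ≤ S ^ (t - 1) * a i := by
    intro i hi
    have hai : 0 ≤ a i := ha i hi
    have haiS : a i ≤ S := Finset.single_le_sum ha hi
    have htne : t - 1 + 1 ≠ 0 := by
      intro h
      have : t = 0 := by linarith
      linarith
    calc a i ^ t = a i ^ (t - 1 + 1) := by norm_num
      _ = a i ^ (t - 1) * a i ^ (1:ℝ) := Real.rpow_add' hai htne
      _ = a i ^ (t - 1) * a i := by rw [Real.rpow_one]
      _ ≤ S ^ (t - 1) * a i := by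
          apply mul_le_mul_of_nonneg_right _ hai
          exact Real.rpow_le_rpow hai haiS (by linarith)
  calc ∑ i ∈ s, a i ^ t ≤ ∑ i ∈ s, S ^ (t - 1) * a i := Finset.sum_le_sum hterm
    _ = S ^ (t - 1) * S := by rw [← Finset.mul_sum]
    _ = S ^ t := by
        have htne : t - 1 + 1 ≠ 0 := by
          intro h
          have : t = 0 := by linarith
          linarith
        have h1 : S ^ (t-1) * S = S ^ (t-1) * S ^ (1:ℝ) := by rw [Real.rpow_one]
        rw [h1, ← Real.rpow_add' hS0 htne]
        norm_num

-- pointwise bound  g m ≤ K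
lemma g_le_K (hg : ∀ m, 0 ≤ g m)
    (key : ∀ N : ℕ, ∑ j ∈ Finset.range (N+1),
      Real.sqrt (∑ k ∈ Finset.range (N+1), (g (j+k))^2) ≤ K) :
    ∀ m, g m ≤ K := by
  intro m
  have h1 : g m ≤ Real.sqrt (∑ k ∈ Finset.range (m+1), (g (0+k))^2) := by
    rw [show g m = Real.sqrt ((g m)^2) from (Real.sqrt_sq (hg m)).symm]
    apply Real.sqrt_le_sqrt
    simpa using Finset.single_le_sum (f := fun k => (g (0+k))^2) (fun k _ => sq_nonneg _)
      (Finset.self_mem_range_succ m)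
  calc g m ≤ Real.sqrt (∑ k ∈ Finset.range (m+1), (g (0+k))^2) := h1
    _ ≤ ∑ j ∈ Finset.range (m+1), Real.sqrt (∑ k ∈ Finset.range (m+1), (g (j+k))^2) :=
        Finset.single_le_sum (f := fun j => Real.sqrt (∑ k ∈ Finset.range (m+1), (g (j+k))^2))
          (fun j _ => Real.sqrt_nonneg _) (Finset.mem_range.mpr (Nat.succ_pos m))
    _ ≤ K := key m

-- window lemma
lemma window_bound (hg : ∀ m, 0 ≤ g m) (N : ℕ) (L : ℕ) : 2^(L+1) ≤ N + 1 →
    ∑ i ∈ Finset.Ico 1 (L+1), (2:ℝ)^i * Real.sqrt (∑ m ∈ Finset.Ico (2^i) (2^(i+1)), (g m)^2)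
      ≤ 2 * ∑ j ∈ Finset.Ico 1 (2^L),
          Real.sqrt (∑ k ∈ Finset.range (N+1), (g (j+k))^2) := by
  induction L with
  | zero => intro _; simp
  | succ L ih =>
    intro hwin
    have hwin' : 2^(L+1) ≤ N + 1 := le_trans (Nat.pow_le_pow_right (by norm_num) (by omega)) hwin
    have hIH := ih hwin'
    rw [Finset.sum_Ico_succ_top (by omega : 1 ≤ L + 1)]
    have hsplitR : ∑ j ∈ Finset.Ico 1 (2^L), Real.sqrt (∑ k ∈ Finset.range (N+1), (g (j+k))^2)
        + ∑ j ∈ Finset.Ico (2^L) (2^(L+1)), Real.sqrt (∑ k ∈ Finset.range (N+1), (g (j+k))^2)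
        = ∑ j ∈ Finset.Ico 1 (2^(L+1)), Real.sqrt (∑ k ∈ Finset.range (N+1), (g (j+k))^2) :=
      Finset.sum_Ico_consecutive _ (Nat.one_le_two_pow) (Nat.pow_le_pow_right (by norm_num) (by omega))
    have hblock : (2:ℝ)^(L+1) * Real.sqrt (∑ m ∈ Finset.Ico (2^(L+1)) (2^(L+1+1)), (g m)^2)
        ≤ 2 * ∑ j ∈ Finset.Ico (2^L) (2^(L+1)),
            Real.sqrt (∑ k ∈ Finset.range (N+1), (g (j+k))^2) := by
      have hperj : ∀ j ∈ Finset.Ico (2^L) (2^(L+1)),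
          Real.sqrt (∑ m ∈ Finset.Ico (2^(L+1)) (2^(L+1+1)), (g m)^2)
            ≤ Real.sqrt (∑ k ∈ Finset.range (N+1), (g (j+k))^2) := by
        intro j hj
        rw [Finset.mem_Ico] at hj
        apply Real.sqrt_le_sqrt
        have hre : ∑ k ∈ Finset.range (N+1), (g (j+k))^2
            = ∑ m ∈ Finset.Ico j (j + (N+1)), (g m)^2 := by
          rw [Finset.sum_Ico_eq_sum_range]
          simp
        rw [hre]
        apply Finset.sum_le_sum_of_subset_of_nonneg
        · apply Finset.Ico_subset_Ico
          · omega
          · have hpow : (2:ℕ)^(L+1+1) ≤ N+1 := hwin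
            omega
        · intro m _ _
          exact sq_nonneg _
      have hcard := Finset.card_nsmul_le_sum (Finset.Ico (2^L) (2^(L+1)))
        (fun j => Real.sqrt (∑ k ∈ Finset.range (N+1), (g (j+k))^2))
        (Real.sqrt (∑ m ∈ Finset.Ico (2^(L+1)) (2^(L+1+1)), (g m)^2)) hperj
      rw [Nat.card_Ico] at hcard
      have hc : (2:ℕ)^(L+1) - 2^L = 2^L := by
        rw [pow_succ]
        omega
      rw [hc, nsmul_eq_mul] at hcard
      calc (2:ℝ)^(L+1) * Real.sqrt (∑ m ∈ Finset.Ico (2^(L+1)) (2^(L+1+1)), (g m)^2)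
          = 2 * ((2^L : ℕ) * Real.sqrt (∑ m ∈ Finset.Ico (2^(L+1)) (2^(L+1+1)), (g m)^2)) := by
            push_cast
            ring
        _ ≤ 2 * ∑ j ∈ Finset.Ico (2^L) (2^(L+1)),
              Real.sqrt (∑ k ∈ Finset.range (N+1), (g (j+k))^2) := by
            apply mul_le_mul_of_nonneg_left hcard (by norm_num)
    calc ∑ i ∈ Finset.Ico 1 (L+1), (2:ℝ)^i * Real.sqrt (∑ m ∈ Finset.Ico (2^i) (2^(i+1)), (g m)^2)
          + (2:ℝ)^(L+1) * Real.sqrt (∑ m ∈ Finset.Ico (2^(L+1)) (2^(L+1+1)), (g m)^2)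
        ≤ 2 * ∑ j ∈ Finset.Ico 1 (2^L), Real.sqrt (∑ k ∈ Finset.range (N+1), (g (j+k))^2)
          + 2 * ∑ j ∈ Finset.Ico (2^L) (2^(L+1)),
              Real.sqrt (∑ k ∈ Finset.range (N+1), (g (j+k))^2) := by
          exact add_le_add hIH hblock
      _ = 2 * ∑ j ∈ Finset.Ico 1 (2^(L+1)),
            Real.sqrt (∑ k ∈ Finset.range (N+1), (g (j+k))^2) := by
          rw [← hsplitR]
          ring

end bookkeeping

lemma block_bound (g : ℕ → ℝ) (hg : ∀ m, 0 ≤ g m) {t : ℝ} (ht1 : 1 ≤ t) (ht2 : t < 2) (i : ℕ) :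
    ∑ m ∈ Finset.Ico (2^i) (2^(i+1)), g m ^ t * (1 + (m:ℝ)) ^ (3*t/2 - 1)
      ≤ (2:ℝ) ^ (3*t/2 - 1)
        * ((2:ℝ)^i * Real.sqrt (∑ m ∈ Finset.Ico (2^i) (2^(i+1)), (g m)^2)) ^ t := by
  classical
  set e : ℝ := 3*t/2 - 1 with he
  have he0 : 0 ≤ e := by rw [he]; linarith
  have ht0 : (0:ℝ) < t := by linarith
  set s := Finset.Ico (2^i : ℕ) (2^(i+1)) with hsd
  set b : ℝ := ∑ m ∈ s, (g m)^2 with hb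
  have hb0 : 0 ≤ b := Finset.sum_nonneg fun m _ => sq_nonneg _
  -- step 1: weights
  have hstep1 : ∑ m ∈ s, g m ^ t * (1 + (m:ℝ)) ^ e
      ≤ ((2:ℝ)^(i+1)) ^ e * ∑ m ∈ s, g m ^ t := by
    rw [Finset.mul_sum]
    apply Finset.sum_le_sum
    intro m hm
    rw [hsd, Finset.mem_Ico] at hm
    have hm1 : (1:ℝ) + m ≤ (2:ℝ)^(i+1) := by
      have : (m:ℝ) < (2:ℝ)^(i+1) := by exact_mod_cast hm.2
      have hnat : m + 1 ≤ 2^(i+1) := hm.2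
      have := (Nat.cast_le (α := ℝ)).mpr hnat
      push_cast at this
      linarith
    have hw : (1 + (m:ℝ)) ^ e ≤ ((2:ℝ)^(i+1)) ^ e :=
      Real.rpow_le_rpow (by positivity) hm1 he0
    have hgt : 0 ≤ g m ^ t := Real.rpow_nonneg (hg m) t
    calc g m ^ t * (1 + (m:ℝ)) ^ e ≤ g m ^ t * ((2:ℝ)^(i+1)) ^ e :=
          mul_le_mul_of_nonneg_left hw hgt
      _ = ((2:ℝ)^(i+1)) ^ e * g m ^ t := by ring
  -- step 2: Hölder
  have hconj : Real.HolderConjugate (2/t) (2/(2-t)) := by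
    constructor
    · rw [inv_div, inv_div, inv_one]; ring
    · positivity
    · have : 0 < 2 - t := by linarith
      positivity
  have hcardn : s.card = 2^i := by
    rw [hsd, Nat.card_Ico, pow_succ]
    omega
  have hhold : ∑ m ∈ s, g m ^ t ≤ b ^ (t/2) * ((2:ℝ)^i) ^ ((2-t)/2) := by
    have h := Real.inner_le_Lp_mul_Lq s (fun m => g m ^ t) (fun _ => 1) hconj
    simp only [mul_one] at h
    have h1 : ∀ m ∈ s, |g m ^ t| ^ (2/t) = (g m)^2 := by
      intro m _
      rw [abs_of_nonneg (Real.rpow_nonneg (hg m) t), ← Real.rpow_mul (hg m)]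
      have h2 : t * (2/t) = ((2:ℕ):ℝ) := by field_simp; norm_num
      rw [h2, Real.rpow_natCast]
    have hsum1 : ∑ m ∈ s, |g m ^ t| ^ (2/t) = b := by
      rw [hb]; exact Finset.sum_congr rfl h1
    have hsumq : ∑ m ∈ s, |(1:ℝ)| ^ (2/(2-t)) = ((2:ℝ)^i) := by
      simp only [abs_one, Real.one_rpow]
      rw [Finset.sum_const, hcardn, nsmul_eq_mul, mul_one]
      push_cast
      ring
    have hexp1 : 1/(2/t) = t/2 := by rw [one_div, inv_div]
    have hexp2 : 1/(2/(2-t)) = (2-t)/2 := by rw [one_div, inv_div]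
    rw [hsum1, hsumq, hexp1, hexp2] at h
    exact h
  -- step 3: collect powers of two
  have hpos : (0:ℝ) < (2:ℝ)^i := by positivity
  have hfinal : ((2:ℝ)^(i+1))^e * (b^(t/2) * ((2:ℝ)^i)^((2-t)/2))
      = (2:ℝ)^e * ((2:ℝ)^i * Real.sqrt b)^t := by
    have hp1 : ((2:ℝ)^(i+1)) = 2 * (2:ℝ)^i := by ring
    have hbexp : b ^ (t/2) = (Real.sqrt b) ^ t := by
      rw [Real.sqrt_eq_rpow, ← Real.rpow_mul hb0]
      congr 1
      ring
    have hcollect : ((2:ℝ)^i)^e * ((2:ℝ)^i)^((2-t)/2) = ((2:ℝ)^i)^t := by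
      rw [← Real.rpow_add hpos]
      congr 1
      rw [he]
      ring
    rw [hp1, Real.mul_rpow (by norm_num : (0:ℝ) ≤ 2) hpos.le,
      Real.mul_rpow hpos.le (Real.sqrt_nonneg b), hbexp]
    calc (2:ℝ)^e * ((2:ℝ)^i)^e * (Real.sqrt b ^ t * ((2:ℝ)^i)^((2-t)/2))
        = (2:ℝ)^e * ((((2:ℝ)^i)^e * ((2:ℝ)^i)^((2-t)/2)) * Real.sqrt b ^ t) := by ring
      _ = (2:ℝ)^e * (((2:ℝ)^i)^t * Real.sqrt b ^ t) := by rw [hcollect]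
  calc ∑ m ∈ s, g m ^ t * (1 + (m:ℝ)) ^ e
      ≤ ((2:ℝ)^(i+1)) ^ e * ∑ m ∈ s, g m ^ t := hstep1
    _ ≤ ((2:ℝ)^(i+1)) ^ e * (b^(t/2) * ((2:ℝ)^i)^((2-t)/2)) :=
        mul_le_mul_of_nonneg_left hhold (Real.rpow_nonneg (by positivity) e)
    _ = (2:ℝ)^e * ((2:ℝ)^i * Real.sqrt b)^t := hfinal

lemma summable_main (g : ℕ → ℝ) (hg : ∀ m, 0 ≤ g m) (K : ℝ) (hK : 0 ≤ K)
    (key : ∀ N : ℕ, ∑ j ∈ Finset.range (N+1),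
      Real.sqrt (∑ k ∈ Finset.range (N+1), (g (j+k))^2) ≤ K)
    {t : ℝ} (ht1 : 1 ≤ t) (ht2 : t < 2) :
    Summable (fun m : ℕ => g m ^ t * (1 + (m:ℝ)) ^ (3*t/2 - 1)) := by
  classical
  set e : ℝ := 3*t/2 - 1 with he
  have he0 : 0 ≤ e := by rw [he]; linarith
  set P : ℕ → ℝ := fun m => g m ^ t * (1 + (m:ℝ)) ^ e with hP
  have hP0 : ∀ m, 0 ≤ P m := by
    intro m
    exact mul_nonneg (Real.rpow_nonneg (hg m) t) (Real.rpow_nonneg (by positivity) e)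
  set a : ℕ → ℝ := fun i =>
    (2:ℝ)^i * Real.sqrt (∑ m ∈ Finset.Ico (2^i) (2^(i+1)), (g m)^2) with ha
  have ha0 : ∀ i, 0 ≤ a i := fun i => by positivity
  have hgK := g_le_K hg key
  apply summable_of_sum_range_le (c := K ^ t + (2:ℝ)^e * (3*K)^t) hP0
  intro n
  set I := n with hI
  set N := 2^I with hN
  -- a-sum bound
  have hasum : ∑ i ∈ Finset.range I, a i ≤ 3 * K := by
    rcases Nat.eq_zero_or_pos I with h0 | hIpos
    · rw [h0]
      simp
      positivity
    · obtain ⟨L, rfl⟩ : ∃ L, I = L + 1 := ⟨I - 1, by omega⟩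
      have hsplit : ∑ i ∈ Finset.Ico 0 1, a i + ∑ i ∈ Finset.Ico 1 (L+1), a i
          = ∑ i ∈ Finset.Ico 0 (L+1), a i :=
        Finset.sum_Ico_consecutive a (by omega) (by omega)
      rw [Finset.range_eq_Ico, ← hsplit]
      have ha0v : ∑ i ∈ Finset.Ico 0 1, a i ≤ K := by
        rw [show Finset.Ico 0 1 = {0} from rfl, Finset.sum_singleton]
        rw [ha]
        simp only [pow_zero, one_mul]
        have hico : Finset.Ico (1:ℕ) (2^(0+1)) = {1} := by decide
        rw [hico, Finset.sum_singleton, Real.sqrt_sq (hg 1)]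
        exact hgK 1
      have hwin : 2^(L+1) ≤ N + 1 := by
        rw [hN]
        exact Nat.le_succ_of_le (Nat.pow_le_pow_right (by norm_num) (by omega))
      have hmid := window_bound hg N L hwin
      have htail : ∑ j ∈ Finset.Ico 1 (2^L),
            Real.sqrt (∑ k ∈ Finset.range (N+1), (g (j+k))^2)
          ≤ ∑ j ∈ Finset.range (N+1),
            Real.sqrt (∑ k ∈ Finset.range (N+1), (g (j+k))^2) := by
        apply Finset.sum_le_sum_of_subset_of_nonneg
        · intro j hj
          rw [Finset.mem_Ico] at hj
          rw [Finset.mem_range]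
          have : (2:ℕ)^L ≤ N := by
            rw [hN]
            exact Nat.pow_le_pow_right (by norm_num) (by omega)
          omega
        · intro j _ _
          exact Real.sqrt_nonneg _
      have haIco : ∑ i ∈ Finset.Ico 1 (L+1), a i ≤ 2 * K := by
        calc ∑ i ∈ Finset.Ico 1 (L+1), a i
            ≤ 2 * ∑ j ∈ Finset.Ico 1 (2^L),
                Real.sqrt (∑ k ∈ Finset.range (N+1), (g (j+k))^2) := hmid
          _ ≤ 2 * ∑ j ∈ Finset.range (N+1),
                Real.sqrt (∑ k ∈ Finset.range (N+1), (g (j+k))^2) := by linarith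
          _ ≤ 2 * K := by linarith [key N]
      linarith
  -- assemble
  have hsubset : ∑ m ∈ Finset.range n, P m ≤ ∑ m ∈ Finset.range (2^I), P m := by
    apply Finset.sum_le_sum_of_subset_of_nonneg
    · exact Finset.range_subset_range.mpr (le_of_lt (Nat.lt_two_pow_self (n := n)))
    · intro m _ _
      exact hP0 m
  have hpart := range_two_pow_partition P I
  have hblocks : ∑ i ∈ Finset.range I, ∑ m ∈ Finset.Ico (2^i) (2^(i+1)), P m
      ≤ (2:ℝ)^e * (3*K)^t := by
    calc ∑ i ∈ Finset.range I, ∑ m ∈ Finset.Ico (2^i) (2^(i+1)), P m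
        ≤ ∑ i ∈ Finset.range I, (2:ℝ)^e * a i ^ t := by
          apply Finset.sum_le_sum
          intro i _
          exact block_bound g hg ht1 ht2 i
      _ = (2:ℝ)^e * ∑ i ∈ Finset.range I, a i ^ t := by rw [Finset.mul_sum]
      _ ≤ (2:ℝ)^e * (∑ i ∈ Finset.range I, a i) ^ t := by
          apply mul_le_mul_of_nonneg_left _ (Real.rpow_nonneg (by norm_num) e)
          exact sum_rpow_le_rpow_sum _ _ (fun i _ => ha0 i) ht1
      _ ≤ (2:ℝ)^e * (3*K)^t := by
          apply mul_le_mul_of_nonneg_left _ (Real.rpow_nonneg (by norm_num) e)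
          apply Real.rpow_le_rpow (Finset.sum_nonneg fun i _ => ha0 i) hasum (by linarith)
  have hP0bound : P 0 ≤ K ^ t := by
    rw [hP]
    simp only [Nat.cast_zero]
    rw [show (1:ℝ) + 0 = 1 by norm_num, Real.one_rpow, mul_one]
    exact Real.rpow_le_rpow (hg 0) (hgK 0) (by linarith)
  calc ∑ m ∈ Finset.range n, P m ≤ ∑ m ∈ Finset.range (2^I), P m := hsubset
    _ = P 0 + ∑ i ∈ Finset.range I, ∑ m ∈ Finset.Ico (2^i) (2^(i+1)), P m := hpart
    _ ≤ K ^ t + (2:ℝ)^e * (3*K)^t := add_le_add hP0bound hblocks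

/-- For `1 ≤ t < 4/3`: if the Hankel matrix `{γ_{j+k}}` belongs to `ℓ¹ ⊗̌ ℓ¹`, then
`∑_k |γ_k|^t (1+k)^{3t/2 - 1} < ∞`. -/
theorem hankel_inj_weighted_summable (t : ℝ) (ht1 : 1 ≤ t) (ht2 : t < 4 / 3)
    (γ : ℕ → ℂ) (hγ : HankelInInj γ) :
    Summable fun k : ℕ => ‖γ k‖ ^ t * (1 + (k : ℝ)) ^ (3 * t / 2 - 1) := by
  obtain ⟨C, hC⟩ := hγ
  have key : ∀ N : ℕ, ∑ j ∈ Finset.range (N+1),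
      Real.sqrt (∑ k ∈ Finset.range (N+1), ‖γ (j+k)‖^2) ≤ Real.sqrt 2 * C := by
    intro N
    calc ∑ j ∈ Finset.range (N+1), Real.sqrt (∑ k ∈ Finset.range (N+1), ‖γ (j+k)‖^2)
        ≤ ∑ j ∈ Finset.range (N+1), Real.sqrt 2 * (∫ β in (0:ℝ)..1, ‖hfun γ N j β‖) :=
          Finset.sum_le_sum (fun j _ => sqrt_sigma_le N j)
      _ = Real.sqrt 2 * ∑ j ∈ Finset.range (N+1), (∫ β in (0:ℝ)..1, ‖hfun γ N j β‖) := by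
          rw [Finset.mul_sum]
      _ ≤ Real.sqrt 2 * C := by
          have h := sum_B1_le hC N
          exact mul_le_mul_of_nonneg_left h (Real.sqrt_nonneg 2)
  have hK0 : 0 ≤ Real.sqrt 2 * C := by
    have h0 : (0:ℝ) ≤ ∑ j ∈ Finset.range 1,
        Real.sqrt (∑ k ∈ Finset.range 1, ‖γ (j+k)‖^2) :=
      Finset.sum_nonneg fun j _ => Real.sqrt_nonneg _
    exact le_trans h0 (key 0)
  exact summable_main (fun m => ‖γ m‖) (fun m => norm_nonneg _) (Real.sqrt 2 * C)
    hK0 key ht1 (by linarith)
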